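/- Let K be an infinite field. For every d ≥ 1 there exists an eventually periodic sequence h : ℕ → ℕ taking values in {8, 9} (shifted by three: values of a Hilbert function h_A(n+3)) whose minimal initial non-periodic segment has length exactly d; concretely, for α ∈ K× of multiplicative order ω not dividing ρ = d − 4 (choosing ω > ρ), the sequence c_n = 1 if (n = ρ or ω ∣ n) and c_n = 0 otherwise is eventually periodic with minimal preperiod exactly ρ + 1. -/

import Mathlib

/-- The sequence `c_n = 1` iff `n = ρ` or `ω ∣ n` (with `ω > ρ ≥ 1`) is
eventually periodic with period `ω` and minimal preperiod exactly `ρ + 1`. -/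
theorem preperiod_exactly (ρ ω : ℕ) (hρ : 1 ≤ ρ) (hω : ρ < ω)
    (hdvd : ¬ ω ∣ ρ) (c : ℕ → ℕ)
    (hc : ∀ n, c n = if n = ρ ∨ ω ∣ n then 1 else 0) :
    (∀ n, ρ + 1 ≤ n → c (n + ω) = c n) ∧
      ∀ N : ℕ, (∀ n, N ≤ n → c (n + ω) = c n) → ρ + 1 ≤ N := by
  constructor
  · intro n hn
    rw [hc, hc]
    have h1 : n ≠ ρ := by omega
    have h2 : n + ω ≠ ρ := by omega
    have h3 : (ω ∣ n + ω) ↔ ω ∣ n := by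
      constructor
      · intro h; exact (Nat.dvd_add_right (dvd_refl ω)).mp (by rwa [Nat.add_comm] at h)
      · intro h; exact Nat.dvd_add h (dvd_refl ω)
    simp [h1, h2, h3]
  · intro N hN
    by_contra h
    have hNρ : N ≤ ρ := by omega
    have := hN ρ hNρ
    rw [hc, hc] at this
    have h1 : ρ + ω ≠ ρ := by omega
    have h2 : ¬ ω ∣ ρ + ω := fun h => hdvd ((Nat.dvd_add_right (dvd_refl ω)).mp (by rwa [Nat.add_comm] at h))
    simp [h1, h2] at this
    omega
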